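/- Monotone limit of view inclusions: suppose (Vᵣ) are round views on P satisfying the IS axioms and i ∈ P is such that the set Bᵣ = Vᵣ(i) eventually consists only of vertices of the sink component SC (i.e., ∃ r₀, ∀ r ≥ r₀, Vᵣ(i) ⊆ SC). If moreover i ∈ SC, then for every j ∈ P and every r ≥ r₀ there is a path from j to i in G⁽ʳ⁾ = ⋃_{s≥r} Gₛ. -/

import Mathlib

/-- Forward direction of Proposition 1: if `i` is in the sink strongly
connected component `SC` of the limit graph `G*`, and from round `r₀` on the
view of `i` consists only of members of `SC`, then for every process `j` and
every `r ≥ r₀` there is a directed path from `j` to `i` in the tail graph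
`G⁽ʳ⁾ = ⋃_{s ≥ r} G_s` (edge `(a,b)` of `G_s` iff `b ∈ V s a`). -/
theorem sink_membership_gives_tail_paths
    {P : Type*} [Fintype P] [DecidableEq P] [Nonempty P]
    (V : ℕ → P → Finset P)
    (hself : ∀ r i, i ∈ V r i)
    (hcontain : ∀ r i j, V r i ⊆ V r j ∨ V r j ⊆ V r i)
    (himm : ∀ r i j, i ∈ V r j → V r i ⊆ V r j)
    (Gstar : P → P → Prop)
    (hG : ∀ a b, Gstar a b ↔ {s | b ∈ V s a}.Infinite)
    (SC : Set P)
    (hSCne : SC.Nonempty)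
    (hSCconn : ∀ a ∈ SC, ∀ b ∈ SC, Relation.ReflTransGen Gstar a b)
    (hSCsink : ∀ a ∈ SC, ∀ v, Relation.ReflTransGen Gstar a v → v ∈ SC)
    (i : P) (hi : i ∈ SC)
    (r₀ : ℕ) (hr₀ : ∀ r ≥ r₀, ∀ x ∈ V r i, x ∈ SC) :
    ∀ (j : P) (r : ℕ), r₀ ≤ r →
      Relation.ReflTransGen (fun a b => ∃ s, r ≤ s ∧ b ∈ V s a) j i := by
  intro j r hr
  -- lift Gstar paths to tail paths
  have lift : ∀ a b, Relation.ReflTransGen Gstar a b →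
      Relation.ReflTransGen (fun a b => ∃ s, r ≤ s ∧ b ∈ V s a) a b := by
    intro a b hab
    refine Relation.ReflTransGen.mono ?_ a b hab
    intro x y hxy
    obtain ⟨s, hs, hgt⟩ := ((hG x y).mp hxy).exists_gt r
    exact ⟨s, le_of_lt hgt, hs⟩
  -- at round r, either edge j → i, or j ∈ V r i hence j ∈ SC
  by_cases h : i ∈ V r j
  · exact Relation.ReflTransGen.single ⟨r, le_refl r, h⟩
  · have hj : j ∈ V r i := by
      rcases hcontain r i j with hij | hji
      · exact absurd (hij (hself r i)) h
      · exact hji (hself r j)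
    have hjSC : j ∈ SC := hr₀ r hr j hj
    exact lift j i (hSCconn j hjSC i hi)
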